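/- Let λ ∈ [0, π/2) and let f be analytic on the open unit disk 𝔻 with f(0) = 0, f′(0) = 1, f(z) ≠ 0 for all z ∈ 𝔻 \ {0}, and f′(z) ≠ 0 for all z ∈ 𝔻. Suppose that for every z ∈ 𝔻 and every real number A with |A| ≥ sec λ · √(1 + 2 cos λ) − tan λ one has 1 + z f″(z)/f′(z) + (e^{−iλ} − 1)·z f′(z)/f(z) ≠ iA. Then Re(e^{−iλ} · z f′(z)/f(z)) > 0 for all z ∈ 𝔻. -/

import Mathlib

open Complex Metric



private lemma hasDerivAt_normSq_comp {F : ℝ → ℂ} {F' : ℂ} {t : ℝ} (h : HasDerivAt F F' t) :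
    HasDerivAt (fun s => Complex.normSq (F s)) (2 * ((starRingEnd ℂ) (F t) * F').re) t := by
  have hre : HasDerivAt (fun s => (F s).re) F'.re t :=
    (Complex.reCLM.hasFDerivAt.comp_hasDerivAt t h)
  have him : HasDerivAt (fun s => (F s).im) F'.im t :=
    (Complex.imCLM.hasFDerivAt.comp_hasDerivAt t h)
  have := (hre.mul hre).add (him.mul him)
  convert this using 1
  · rfl
  · rfl
  · funext s; simp [Complex.normSq_apply]
  · simp [Complex.mul_re, Complex.conj_re, Complex.conj_im]; ring

private lemma deriv_ge_two {u : ℝ → ℝ} {d : ℝ} (hu : HasDerivAt u d 1) (h1 : u 1 = 1)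
    (hle : ∀ t : ℝ, 0 < t → t < 1 → u t ≤ t ^ 2) : 2 ≤ d := by
  have hs : Filter.Tendsto (slope u 1) (nhdsWithin 1 (Set.Iio 1)) (nhds d) :=
    (hasDerivAt_iff_tendsto_slope.mp hu).mono_left
      (nhdsWithin_mono 1 (fun x hx => ne_of_lt hx))
  have ht : Filter.Tendsto (fun t : ℝ => t + 1) (nhdsWithin 1 (Set.Iio 1)) (nhds 2) := by
    have h2 := ((continuous_add_right (1:ℝ)).tendsto 1)
    norm_num at h2
    exact h2.mono_left nhdsWithin_le_nhds
  refine le_of_tendsto_of_tendsto ht hs ?_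
  have hIoo : Set.Ioo (0:ℝ) 1 ∈ nhdsWithin (1:ℝ) (Set.Iio 1) :=
    Ioo_mem_nhdsLT_of_mem (by constructor <;> norm_num)
  filter_upwards [hIoo] with t ht
  have ht0 : 0 < t := ht.1
  have ht1 : t < 1 := ht.2
  have : u t ≤ t ^ 2 := hle t ht0 ht1
  rw [slope_def_field, h1]
  rw [le_div_iff_of_neg (by linarith : t - 1 < 0)]
  nlinarith

private lemma mm_lemma {p : ℂ → ℂ} {a : ℂ} (hp : DifferentiableOn ℂ p (ball 0 1))
    (hp0 : p 0 = a) (ha : 0 < a.re) {z1 : ℂ} (hz1 : z1 ∈ ball (0:ℂ) 1)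
    (hre : (p z1).re ≤ 0) :
    ∃ z0 ∈ ball (0:ℂ) 1, z0 ≠ 0 ∧ (p z0).re = 0 ∧ ∃ σ : ℝ,
      σ ≤ -Complex.normSq (a - p z0) / (2 * a.re) ∧ z0 * deriv p z0 = (σ : ℂ) := by
  have hpc : ContinuousOn p (ball (0:ℂ) 1) := hp.continuousOn
  -- IVT along segments
  have key : ∀ z ∈ ball (0:ℂ) 1, (p z).re ≤ 0 →
      ∃ t : ℝ, t ∈ Set.Icc (0:ℝ) 1 ∧ (p ((t:ℂ) * z)).re = 0 := by
    intro z hz hzre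
    have hmem : ∀ t : ℝ, t ∈ Set.Icc (0:ℝ) 1 → (t:ℂ) * z ∈ ball (0:ℂ) 1 := by
      intro t ht
      rw [mem_ball_zero_iff] at hz ⊢
      calc ‖(t:ℂ) * z‖ = |t| * ‖z‖ := by
            rw [norm_mul, Complex.norm_real, Real.norm_eq_abs]
        _ ≤ 1 * ‖z‖ := by
            apply mul_le_mul_of_nonneg_right _ (norm_nonneg z)
            rw [_root_.abs_of_nonneg ht.1]; exact ht.2
        _ < 1 := by rw [one_mul]; exact hz
    have hcont : ContinuousOn (fun t : ℝ => (p ((t:ℂ) * z)).re) (Set.Icc 0 1) := by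
      apply Complex.continuous_re.comp_continuousOn
      apply hpc.comp (Continuous.continuousOn (by continuity))
      intro t ht
      exact hmem t ht
    have h0' : (p ((0:ℝ) * z : ℂ)).re = a.re := by norm_num [hp0]
    have h1' : (p ((1:ℝ) * z : ℂ)).re = (p z).re := by norm_num
    have := intermediate_value_Icc' (zero_le_one) hcont
    have h0mem : (0:ℝ) ∈ Set.Icc ((p (((1:ℝ):ℂ) * z)).re) ((p (((0:ℝ):ℂ) * z)).re) := by
      rw [h0', h1']; exact ⟨hzre, le_of_lt ha⟩
    obtain ⟨t, ht, hteq⟩ := this h0mem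
    exact ⟨t, ht, hteq⟩
  -- the set S
  set S : Set ℂ := {z | z ∈ closedBall (0:ℂ) ‖z1‖ ∧ (p z).re = 0} with hS
  have hz1n : ‖z1‖ < 1 := mem_ball_zero_iff.mp hz1
  have hsub : closedBall (0:ℂ) ‖z1‖ ⊆ ball (0:ℂ) 1 := by
    intro z hz; rw [mem_closedBall_zero_iff] at hz; rw [mem_ball_zero_iff]; linarith
  have hSne : S.Nonempty := by
    obtain ⟨t, ht, hteq⟩ := key z1 hz1 hre
    refine ⟨(t:ℂ) * z1, ?_, hteq⟩
    rw [mem_closedBall_zero_iff, norm_mul, Complex.norm_real, Real.norm_eq_abs]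
    calc |t| * ‖z1‖ ≤ 1 * ‖z1‖ := by
          apply mul_le_mul_of_nonneg_right _ (norm_nonneg z1)
          rw [_root_.abs_of_nonneg ht.1]; exact ht.2
      _ = ‖z1‖ := one_mul _
  have hSclosed : IsClosed S := by
    have : S = closedBall (0:ℂ) ‖z1‖ ∩ (fun z => (p z).re) ⁻¹' {0} := by
      ext z; simp [hS]
    rw [this]
    exact ContinuousOn.preimage_isClosed_of_isClosed
      ((Complex.continuous_re.comp_continuousOn (hpc.mono hsub)))
      isClosed_closedBall isClosed_singleton
  have hScompact : IsCompact S :=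
    (isCompact_closedBall (0:ℂ) ‖z1‖).of_isClosed_subset hSclosed (fun z hz => hz.1)
  obtain ⟨z0, hz0S, hz0min⟩ := hScompact.exists_isMinOn hSne continuous_norm.continuousOn
  rw [isMinOn_iff] at hz0min
  have hz0le : ‖z0‖ ≤ ‖z1‖ := mem_closedBall_zero_iff.mp hz0S.1
  have hz0ball : z0 ∈ ball (0:ℂ) 1 := hsub hz0S.1
  have hre0 : (p z0).re = 0 := hz0S.2
  have hz0ne : z0 ≠ 0 := by
    intro h; rw [h, hp0] at hre0; linarith
  have hz0pos : 0 < ‖z0‖ := norm_pos_iff.mpr hz0ne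
  -- positivity inside
  have hpos : ∀ z : ℂ, ‖z‖ < ‖z0‖ → 0 < (p z).re := by
    intro z hz
    by_contra hc
    push_neg at hc
    have hzb : z ∈ ball (0:ℂ) 1 := mem_ball_zero_iff.mpr (by linarith)
    obtain ⟨t, ht, hteq⟩ := key z hzb hc
    have hyS : ((t:ℂ) * z) ∈ S := by
      refine ⟨?_, hteq⟩
      rw [mem_closedBall_zero_iff, norm_mul, Complex.norm_real, Real.norm_eq_abs]
      have : |t| * ‖z‖ ≤ ‖z‖ := by
        calc |t| * ‖z‖ ≤ 1 * ‖z‖ :=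
          mul_le_mul_of_nonneg_right (by rw [_root_.abs_of_nonneg ht.1]; exact ht.2) (norm_nonneg z)
        _ = ‖z‖ := one_mul _
      linarith
    have := hz0min _ hyS
    have hyn : ‖(t:ℂ) * z‖ ≤ ‖z‖ := by
      rw [norm_mul, Complex.norm_real, Real.norm_eq_abs]
      calc |t| * ‖z‖ ≤ 1 * ‖z‖ :=
        mul_le_mul_of_nonneg_right (by rw [_root_.abs_of_nonneg ht.1]; exact ht.2) (norm_nonneg z)
      _ = ‖z‖ := one_mul _
    have : ‖z0‖ ≤ ‖(t:ℂ)*z‖ := by simpa using this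
    linarith
  have hnonneg : ∀ z : ℂ, ‖z‖ ≤ ‖z0‖ → 0 ≤ (p z).re := by
    intro z hz
    rcases lt_or_eq_of_le hz with h | h
    · exact le_of_lt (hpos z h)
    by_contra hc
    push_neg at hc
    have hzb : z ∈ ball (0:ℂ) 1 := mem_ball_zero_iff.mpr (by rw [h]; exact lt_of_le_of_lt hz0le hz1n)
    obtain ⟨t, ht, hteq⟩ := key z hzb (le_of_lt hc)
    have ht1 : t < 1 := by
      rcases lt_or_eq_of_le ht.2 with h' | h'
      · exact h'
      · exfalso; rw [h'] at hteq; norm_num at hteq; linarith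
    have hzne : z ≠ 0 := by
      intro hz0'; rw [hz0', hp0] at hc; linarith
    have : ‖(t:ℂ) * z‖ < ‖z0‖ := by
      rw [norm_mul, Complex.norm_real, Real.norm_eq_abs, _root_.abs_of_nonneg ht.1, ← h]
      have hzpos : 0 < ‖z‖ := norm_pos_iff.mpr hzne
      nlinarith
    have := hpos _ this
    linarith
  refine ⟨z0, hz0ball, hz0ne, hre0, ?_⟩
  set ca := (starRingEnd ℂ) a with hca
  have hden : ∀ z : ℂ, 0 ≤ (p z).re → ca + p z ≠ 0 := by
    intro z hz h0
    have := congrArg Complex.re h0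
    simp [hca, Complex.add_re, Complex.conj_re] at this
    linarith
  set w : ℂ → ℂ := fun z => (a - p z) / (ca + p z) with hw
  have hball0 : ball (0:ℂ) ‖z0‖ ⊆ ball (0:ℂ) 1 :=
    ball_subset_ball (le_of_lt (lt_of_le_of_lt hz0le hz1n))
  have hwd : DifferentiableOn ℂ w (ball 0 ‖z0‖) := by
    rw [hw]
    apply DifferentiableOn.div
    · exact (differentiableOn_const a).sub (hp.mono hball0)
    · exact (differentiableOn_const ca).add (hp.mono hball0)
    · intro z hz; exact hden z (le_of_lt (hpos z (mem_ball_zero_iff.mp hz)))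
  have hw0 : w 0 = 0 := by simp [hw, hp0]
  have hnormlt : ∀ z : ℂ, 0 < (p z).re → normSq (a - p z) < normSq (ca + p z) := by
    intro z hz
    simp only [Complex.normSq_apply, Complex.sub_re, Complex.sub_im, Complex.add_re,
      Complex.add_im, hca, Complex.conj_re, Complex.conj_im]
    nlinarith [mul_pos ha hz]
  have hnormle : ∀ z : ℂ, 0 ≤ (p z).re → normSq (a - p z) ≤ normSq (ca + p z) := by
    intro z hz
    simp only [Complex.normSq_apply, Complex.sub_re, Complex.sub_im, Complex.add_re,
      Complex.add_im, hca, Complex.conj_re, Complex.conj_im]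
    nlinarith [mul_nonneg (le_of_lt ha) hz]
  have hmaps : Set.MapsTo w (ball 0 ‖z0‖) (ball (0:ℂ) 1) := by
    intro z hz
    rw [mem_ball_zero_iff]
    have hz' := hpos z (mem_ball_zero_iff.mp hz)
    have hd := hden z (le_of_lt hz')
    rw [hw]
    simp only
    rw [norm_div, div_lt_one (norm_pos_iff.mpr hd)]
    have h2 := hnormlt z hz'
    have e1 : ‖a - p z‖ = Real.sqrt (normSq (a - p z)) := by
      rw [Complex.norm_def]
    have e2 : ‖ca + p z‖ = Real.sqrt (normSq (ca + p z)) := by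
      rw [Complex.norm_def]
    rw [e1, e2]
    exact Real.sqrt_lt_sqrt (normSq_nonneg _) h2
  have hschwarz : ∀ z ∈ ball (0:ℂ) ‖z0‖, ‖w z‖ ≤ ‖z‖ / ‖z0‖ := by
    intro z hz
    have := Complex.dist_le_div_mul_dist_of_mapsTo_ball hwd (by rw [hw0]; exact hmaps.mono_right ball_subset_closedBall) hz
    rw [hw0, dist_zero_right, dist_zero_right] at this
    calc ‖w z‖ ≤ 1 / ‖z0‖ * ‖z‖ := this
      _ = ‖z‖ / ‖z0‖ := by ring
  have hwle1 : ∀ z : ℂ, ‖z‖ ≤ ‖z0‖ → normSq (w z) ≤ 1 := by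
    intro z hz
    have hd := hden z (hnonneg z hz)
    rw [hw]
    simp only
    rw [map_div₀, div_le_one (normSq_pos.mpr hd)]
    exact hnormle z (hnonneg z hz)
  have hdenz0 : ca + p z0 ≠ 0 := hden z0 (le_of_eq hre0.symm)
  have hw1 : normSq (w z0) = 1 := by
    have heq : normSq (a - p z0) = normSq (ca + p z0) := by
      simp only [Complex.normSq_apply, Complex.sub_re, Complex.sub_im, Complex.add_re,
        Complex.add_im, hca, Complex.conj_re, Complex.conj_im, hre0]
      ring
    rw [hw]
    simp only
    rw [map_div₀, heq, div_self (normSq_pos.mpr hdenz0).ne']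
  -- derivative of w at z0
  have hpz0 : HasDerivAt p (deriv p z0) z0 :=
    (hp.differentiableAt (isOpen_ball.mem_nhds hz0ball)).hasDerivAt
  have h1 : HasDerivAt w (((0 - deriv p z0) * (ca + p z0) - (a - p z0) * (0 + deriv p z0)) /
      (ca + p z0) ^ 2) z0 := by
    rw [hw]
    exact ((hasDerivAt_const z0 a).sub hpz0).div ((hasDerivAt_const z0 ca).add hpz0) hdenz0
  have hD : HasDerivAt w (deriv w z0) z0 := h1.differentiableAt.hasDerivAt
  have hval : deriv w z0 = ((0 - deriv p z0) * (ca + p z0) - (a - p z0) * (0 + deriv p z0)) /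
      (ca + p z0) ^ 2 := h1.deriv
  -- radial derivative
  have hFd : HasDerivAt (fun ζ : ℂ => w (ζ * z0)) (deriv w z0 * z0) 1 := by
    have hD' : HasDerivAt w (deriv w z0) ((1:ℂ) * z0) := by rwa [one_mul]
    have := hD'.comp 1 ((hasDerivAt_id (1:ℂ)).mul_const z0)
    simpa [Function.comp_def] using this
  have hu := hasDerivAt_normSq_comp (hFd.comp_ofReal)
  simp only [Complex.ofReal_one, one_mul] at hu
  have hrad : 2 ≤ 2 * ((starRingEnd ℂ) (w z0) * (deriv w z0 * z0)).re := by
    apply deriv_ge_two hu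
    · simpa using hw1
    · intro t ht0 ht1
      have htz : ‖(t:ℂ) * z0‖ < ‖z0‖ := by
        rw [norm_mul, Complex.norm_real, Real.norm_eq_abs, _root_.abs_of_nonneg (le_of_lt ht0)]
        nlinarith
      have := hschwarz _ (mem_ball_zero_iff.mpr htz)
      have h3 : ‖w ((t:ℂ) * z0)‖ ≤ t := by
        rw [norm_mul, Complex.norm_real, Real.norm_eq_abs,
          _root_.abs_of_nonneg (le_of_lt ht0)] at this
        calc ‖w ((t:ℂ)*z0)‖ ≤ t * ‖z0‖ / ‖z0‖ := this
          _ = t := by rw [mul_div_assoc, div_self (ne_of_gt hz0pos), mul_one]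
      calc normSq (w ((t:ℂ)*z0)) = ‖w ((t:ℂ)*z0)‖ ^ 2 := by
            rw [← Complex.sq_norm]
        _ ≤ t ^ 2 := by nlinarith [norm_nonneg (w ((t:ℂ)*z0))]
  -- tangential derivative
  have hVg : HasDerivAt (fun ζ : ℂ => Complex.exp (ζ * I) * z0) (I * z0) 0 := by
    have he : HasDerivAt (fun ζ : ℂ => Complex.exp (ζ * I)) (Complex.exp ((0:ℂ) * I) * (1 * I)) 0 :=
      (Complex.hasDerivAt_exp ((0:ℂ) * I)).comp 0 ((hasDerivAt_id (0:ℂ)).mul_const I)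
    have := he.mul_const z0
    simpa using this
  have hVd : HasDerivAt (fun ζ : ℂ => w (Complex.exp (ζ * I) * z0)) (deriv w z0 * (I * z0)) 0 := by
    have hD' : HasDerivAt w (deriv w z0) (Complex.exp ((0:ℂ) * I) * z0) := by
      rw [show Complex.exp ((0:ℂ)*I) * z0 = z0 by simp]
      exact hD
    exact hD'.comp 0 hVg
  have hv := hasDerivAt_normSq_comp (hVd.comp_ofReal)
  simp only [Complex.ofReal_zero, zero_mul, Complex.exp_zero, one_mul] at hv
  have hvmax : IsLocalMax (fun θ : ℝ => normSq (w (Complex.exp ((θ:ℂ) * I) * z0))) 0 := by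
    apply Filter.Eventually.of_forall
    intro θ
    simp only [Complex.ofReal_zero, zero_mul, Complex.exp_zero, one_mul]
    rw [hw1]
    apply hwle1
    rw [norm_mul]
    have : ‖Complex.exp ((θ:ℂ) * I)‖ = 1 := by
      rw [Complex.norm_exp_ofReal_mul_I]
    rw [this, one_mul]
  have htan : 2 * ((starRingEnd ℂ) (w z0) * (deriv w z0 * (I * z0))).re = 0 :=
    hvmax.hasDerivAt_eq_zero hv
  -- assemble k
  set ζc : ℂ := (starRingEnd ℂ) (w z0) * (z0 * deriv w z0) with hζc
  have hkre : 1 ≤ ζc.re := by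
    have : ζc = (starRingEnd ℂ) (w z0) * (deriv w z0 * z0) := by rw [hζc]; ring
    rw [this]; linarith [hrad]
  have hkim : ζc.im = 0 := by
    have he : (starRingEnd ℂ) (w z0) * (deriv w z0 * (I * z0)) = I * ζc := by rw [hζc]; ring
    rw [he] at htan
    simp [Complex.mul_re, Complex.I_re, Complex.I_im] at htan
    linarith
  set k : ℝ := ζc.re with hk
  have hζck : ζc = (k : ℂ) := by
    apply Complex.ext
    · simp [hk]
    · simp [hkim]
  have hz0D : z0 * deriv w z0 = (k:ℂ) * w z0 := by
    have h2 : ζc * w z0 = (z0 * deriv w z0) * ((starRingEnd ℂ) (w z0) * w z0) := by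
      rw [hζc]; ring
    have h3 : (starRingEnd ℂ) (w z0) * w z0 = ((normSq (w z0) : ℝ) : ℂ) := by
      rw [mul_comm, Complex.mul_conj]
    rw [h3, hw1] at h2
    simp at h2
    rw [← h2, hζck]
  -- solve for z0 * deriv p z0
  have haR : ((a.re : ℝ) : ℂ) ≠ 0 := Complex.ofReal_ne_zero.mpr (ne_of_gt ha)
  have hconjsum : a + ca = 2 * (a.re : ℂ) := by rw [hca, Complex.add_conj]; push_cast; ring
  have hsolve : z0 * deriv p z0 = -(k:ℂ) * ((a - p z0) * (ca + p z0)) / (2 * (a.re:ℂ)) := by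
    have h4 := hz0D
    rw [hval, hw] at h4
    simp only at h4
    field_simp at h4
    have h2ne : (2 * (a.re:ℂ)) ≠ 0 := mul_ne_zero two_ne_zero haR
    rw [eq_div_iff h2ne]
    apply mul_right_cancel₀ hdenz0
    linear_combination (-(ca + p z0)) * h4 + (- z0 * deriv p z0 * (ca + p z0)) * hconjsum
  have hprod : (a - p z0) * (ca + p z0) = ((normSq (a - p z0) : ℝ) : ℂ) := by
    have hconj : (starRingEnd ℂ) (a - p z0) = ca + p z0 := by
      apply Complex.ext <;>
        simp [hca, Complex.sub_re, Complex.sub_im, Complex.conj_re, Complex.conj_im, hre0]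
    rw [← hconj, Complex.mul_conj]
  refine ⟨-(k * normSq (a - p z0)) / (2 * a.re), ?_, ?_⟩
  · rw [div_le_div_iff_of_pos_right (by positivity : (0:ℝ) < 2*a.re)]
    nlinarith [normSq_nonneg (a - p z0)]
  · rw [hsolve, hprod]
    push_cast
    ring

set_option maxHeartbeats 1000000 in
theorem stmt_5 (lam : ℝ) (hlam : lam ∈ Set.Ico (0 : ℝ) (Real.pi / 2))
    (f : ℂ → ℂ) (hanal : DifferentiableOn ℂ f (ball (0 : ℂ) 1))
    (hf0 : f 0 = 0) (hf'0 : deriv f 0 = 1)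
    (hfne : ∀ z ∈ ball (0 : ℂ) 1, z ≠ 0 → f z ≠ 0)
    (hf'ne : ∀ z ∈ ball (0 : ℂ) 1, deriv f z ≠ 0)
    (hslit : ∀ z ∈ ball (0 : ℂ) 1, z ≠ 0 → ∀ A : ℝ,
      (Real.cos lam)⁻¹ * Real.sqrt (1 + 2 * Real.cos lam) - Real.tan lam ≤ |A| →
      1 + z * deriv (deriv f) z / deriv f z +
        (Complex.exp (-(lam : ℂ) * I) - 1) * (z * deriv f z / f z) ≠ A * I) :
    ∀ z ∈ ball (0 : ℂ) 1, z ≠ 0 →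
      0 < (Complex.exp (-(lam : ℂ) * I) * (z * deriv f z / f z)).re := by
  intro z hz hzne
  have h01 : (0:ℂ) ∈ ball (0:ℂ) 1 := mem_ball_self one_pos
  have hA := hanal.analyticOnNhd isOpen_ball
  have hd1 : DifferentiableOn ℂ (deriv f) (ball (0:ℂ) 1) := (hA.deriv).differentiableOn
  set h : ℂ → ℂ := dslope f 0 with hhdef
  have hh : DifferentiableOn ℂ h (ball (0:ℂ) 1) :=
    (differentiableOn_dslope (isOpen_ball.mem_nhds h01)).mpr hanal
  have hh0 : h 0 = 1 := by rw [hhdef, dslope_same, hf'0]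
  have hhval : ∀ y : ℂ, y ≠ 0 → h y = f y / y := by
    intro y hy
    rw [hhdef, dslope_of_ne f hy, slope_def_field, hf0, sub_zero, sub_zero]
  have hhne : ∀ y ∈ ball (0:ℂ) 1, h y ≠ 0 := by
    intro y hyb
    rcases eq_or_ne y 0 with rfl | hy
    · rw [hh0]; exact one_ne_zero
    · rw [hhval y hy]; exact div_ne_zero (hfne y hyb hy) hy
  set a : ℂ := Complex.exp (-(lam:ℂ) * I) with hadef
  have hane : a ≠ 0 := Complex.exp_ne_zero _
  have hcos : 0 < Real.cos lam :=
    Real.cos_pos_of_mem_Ioo ⟨by linarith [Real.pi_pos, hlam.1], hlam.2⟩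
  have hcast : (-(lam:ℂ)) * I = ((-lam:ℝ):ℂ) * I := by push_cast; ring
  have hare : a.re = Real.cos lam := by
    rw [hadef, hcast, Complex.exp_ofReal_mul_I_re, Real.cos_neg]
  have haim : a.im = -Real.sin lam := by
    rw [hadef, hcast, Complex.exp_ofReal_mul_I_im, Real.sin_neg]
  set p : ℂ → ℂ := fun y => a * (deriv f y / h y) with hpdef
  have hpdiff : DifferentiableOn ℂ p (ball 0 1) := (hd1.div hh hhne).const_mul a
  have hp0 : p 0 = a := by rw [hpdef]; simp [hh0, hf'0]
  have hpeq : ∀ y ∈ ball (0:ℂ) 1, y ≠ 0 → a * (y * deriv f y / f y) = p y := by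
    intro y hyb hy
    rw [hpdef]
    simp only
    rw [hhval y hy, div_div_eq_mul_div]
    ring
  by_contra hcon
  push_neg at hcon
  rw [hpeq z hz hzne] at hcon
  obtain ⟨z0, hz0b, hz0ne, hre0, σ, hσle, hσeq⟩ :=
    mm_lemma hpdiff hp0 (by rw [hare]; exact hcos) hz hcon
  have hfz0 : f z0 ≠ 0 := hfne z0 hz0b hz0ne
  have hf'z0 : deriv f z0 ≠ 0 := hf'ne z0 hz0b
  set q : ℂ → ℂ := fun y => a * (y * deriv f y / f y) with hqdef
  have hev : q =ᶠ[nhds z0] p := by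
    have hopen : IsOpen (ball (0:ℂ) 1 ∩ {y : ℂ | y ≠ 0}) := isOpen_ball.inter isOpen_ne
    have hmem : (ball (0:ℂ) 1 ∩ {y : ℂ | y ≠ 0}) ∈ nhds z0 := hopen.mem_nhds ⟨hz0b, hz0ne⟩
    filter_upwards [hmem] with y hy
    exact hpeq y hy.1 hy.2
  have hderiveq : deriv q z0 = deriv p z0 := hev.deriv_eq
  have hfd : HasDerivAt f (deriv f z0) z0 :=
    (hanal.differentiableAt (isOpen_ball.mem_nhds hz0b)).hasDerivAt
  have hfd2 : HasDerivAt (deriv f) (deriv (deriv f) z0) z0 :=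
    (hd1.differentiableAt (isOpen_ball.mem_nhds hz0b)).hasDerivAt
  have hq : HasDerivAt q (a * (((1 * deriv f z0 + z0 * deriv (deriv f) z0) * f z0 -
      z0 * deriv f z0 * deriv f z0) / f z0 ^ 2)) z0 := by
    rw [hqdef]
    exact (((hasDerivAt_id z0).mul hfd2).div hfd hfz0).const_mul a
  have hσ2 : (σ:ℂ) = z0 * (a * (((1 * deriv f z0 + z0 * deriv (deriv f) z0) * f z0 -
      z0 * deriv f z0 * deriv f z0) / f z0 ^ 2)) := by
    rw [← hσeq, ← hderiveq, hq.deriv]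
  have hpz0val : p z0 = a * (z0 * deriv f z0 / f z0) := (hpeq z0 hz0b hz0ne).symm
  set ρ : ℝ := (p z0).im with hρdef
  have hpz0I : p z0 = (ρ:ℂ) * I := by
    apply Complex.ext
    · simp [hre0]
    · simp [hρdef]
  have hpz0ne : p z0 ≠ 0 := by
    rw [hpz0val]
    exact mul_ne_zero hane (div_ne_zero (mul_ne_zero hz0ne hf'z0) hfz0)
  have hρne : ρ ≠ 0 := by
    intro h0
    rw [hpz0I, h0] at hpz0ne
    simp at hpz0ne
  have hρC : ((ρ:ℝ):ℂ) ≠ 0 := Complex.ofReal_ne_zero.mpr hρne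
  set A : ℝ := ρ - σ / ρ with hAdef
  -- the key identity
  set X : ℂ := z0 * deriv f z0 / f z0 with hX
  set Y : ℂ := z0 * deriv (deriv f) z0 / deriv f z0 with hY
  have hXdef : a * X = (ρ:ℂ) * I := by rw [hX, ← hpz0val, hpz0I]
  have hσ3 : (σ:ℂ) = a * X * (1 + Y - X) := by
    rw [hσ2, hX, hY]
    field_simp
  rw [hXdef] at hσ3
  have hdiv : (σ:ℂ) / (ρ:ℂ) = I * (1 + Y - X) := by
    rw [hσ3]
    field_simp
  have hkey : 1 + Y + (a - 1) * X = (A:ℂ) * I := by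
    rw [hAdef]
    push_cast
    rw [hdiv]
    linear_combination hXdef + (1 + Y - X) * Complex.I_sq
  -- the bound
  have hN : Complex.normSq (a - p z0) = 1 + 2 * ρ * Real.sin lam + ρ ^ 2 := by
    rw [hpz0I]
    simp only [Complex.normSq_apply, Complex.sub_re, Complex.sub_im, Complex.mul_re,
      Complex.mul_im, Complex.I_re, Complex.I_im, Complex.ofReal_re, Complex.ofReal_im,
      hare, haim]
    ring_nf
    linear_combination Real.sin_sq_add_cos_sq lam
  set s' : ℝ := Real.sin lam with hs'
  set C : ℝ := Real.cos lam with hC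
  set S : ℝ := Real.sqrt (1 + 2 * C) with hSdef
  have hS2 : S ^ 2 = 1 + 2 * C := Real.sq_sqrt (by nlinarith)
  have hsin0 : 0 ≤ s' :=
    Real.sin_nonneg_of_nonneg_of_le_pi hlam.1 (by nlinarith [Real.pi_pos, hlam.2])
  set r : ℝ := |ρ| with hrdef
  have hr : 0 < r := abs_pos.mpr hρne
  rw [hare] at hσle
  have hM : σ ≤ -(1 - 2 * r * s' + r ^ 2) / (2 * C) := by
    have h1 : 1 - 2 * r * s' + r ^ 2 ≤ Complex.normSq (a - p z0) := by
      rw [hN]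
      have h2 : 0 ≤ ρ + |ρ| := by cases abs_cases ρ <;> linarith [le_abs_self ρ]
      nlinarith [mul_nonneg hsin0 h2, _root_.sq_abs ρ]
    have h8 : -Complex.normSq (a - p z0) / (2 * C) ≤ -(1 - 2 * r * s' + r ^ 2) / (2 * C) := by
      rw [div_le_div_iff_of_pos_right (by positivity : (0:ℝ) < 2 * C)]
      linarith
    linarith
  have habs : r - σ / r ≤ |A| := by
    rcases abs_cases ρ with ⟨he, hpos'⟩ | ⟨he, hneg⟩
    · have : A = r - σ / r := by rw [hAdef, hrdef, he]
      rw [← this]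
      exact le_abs_self A
    · have : -A = r - σ / r := by
        rw [hAdef, hrdef, he]
        ring
      rw [← this]
      exact neg_le_abs A
  have hchain : C⁻¹ * S - Real.tan lam ≤ r - σ / r := by
    rw [Real.tan_eq_sin_div_cos, ← hs', ← hC]
    have e0 : C⁻¹ * S - s' / C = (S - s') / C := by field_simp
    have hM' : (1 - 2 * r * s' + r ^ 2) / (2 * r * C) ≤ -σ / r := by
      have h6 : (1 - 2 * r * s' + r ^ 2) / (2 * C) ≤ -σ := by
        rw [neg_div] at hM
        linarith
      have h7 : (1 - 2 * r * s' + r ^ 2) / (2 * r * C) =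
          ((1 - 2 * r * s' + r ^ 2) / (2 * C)) / r := by
        rw [div_div]
        ring_nf
      rw [h7, div_le_div_iff_of_pos_right hr]
      exact h6
    have hq2 : (S - s') / C ≤ r + (1 - 2 * r * s' + r ^ 2) / (2 * r * C) := by
      have e1 : r + (1 - 2 * r * s' + r ^ 2) / (2 * r * C) =
          (2 * r ^ 2 * C + (1 - 2 * r * s' + r ^ 2)) / (2 * r * C) := by
        field_simp
      rw [e1, div_le_div_iff₀ hcos (by positivity)]
      have hS2C : C * r ^ 2 * S ^ 2 = C * r ^ 2 * (1 + 2 * C) := by rw [hS2]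
      nlinarith [mul_nonneg hcos.le (sq_nonneg (r * S - 1)), hS2C]
    rw [e0]
    have : r + (1 - 2 * r * s' + r ^ 2) / (2 * r * C) ≤ r + -σ / r := by linarith
    calc (S - s') / C ≤ r + (1 - 2 * r * s' + r ^ 2) / (2 * r * C) := hq2
      _ ≤ r + -σ / r := this
      _ = r - σ / r := by ring
  have hbound : C⁻¹ * S - Real.tan lam ≤ |A| := le_trans hchain habs
  exact hslit z0 hz0b hz0ne A hbound hkey
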